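/- Let n, l be positive natural numbers, A and Θ n×n real matrices, B an n×1 real matrix, K a 1×n real matrix, D an n×l real matrix, τ > 0, γ > 0, f̄ ≥ 0 real numbers, and P a symmetric n×n real matrix such that P − γI is positive definite and the block matrix [[(A+BKΘ)ᵀP + P(A+BKΘ) + τP, PD], [DᵀP, −τI_l]] is negative definite. Let f : ℝ → ℝˡ satisfy |f(t)|² ≤ f̄ for all t ≥ 0 and let x : ℝ → ℝⁿ be differentiable with x′(t) = (A+BKΘ)x(t) + D f(t) for all t ≥ 0. Then limsup_{t→∞} |x(t)| ≤ √(f̄/γ). -/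

import Mathlib

open Matrix Filter

/-- A real matrix is negative definite (as a quadratic form) if `zᵀ M z < 0`
for every nonzero vector `z`. -/
def NegDefQF {m : Type*} [Fintype m] (M : Matrix m m ℝ) : Prop :=
  ∀ z : m → ℝ, z ≠ 0 → z ⬝ᵥ M *ᵥ z < 0

/-- Euclidean norm of a vector in `ℝⁿ`. -/
noncomputable def euclidNorm {n : ℕ} (v : Fin n → ℝ) : ℝ :=
  Real.sqrt (∑ i, v i ^ 2)

private lemma dp_transpose' {n m : ℕ} (M : Matrix (Fin n) (Fin m) ℝ) (v : Fin m → ℝ)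
    (y : Fin n → ℝ) : (M *ᵥ v) ⬝ᵥ y = v ⬝ᵥ (Mᵀ *ᵥ y) := by
  rw [Matrix.mulVec_transpose, dotProduct_comm, Matrix.dotProduct_mulVec, dotProduct_comm]

private lemma hasDerivAt_quadForm {n : ℕ} (P : Matrix (Fin n) (Fin n) ℝ) (x : ℝ → Fin n → ℝ)
    (v : Fin n → ℝ) (t : ℝ) (h : HasDerivAt x v t) :
    HasDerivAt (fun s => x s ⬝ᵥ P *ᵥ x s) (v ⬝ᵥ P *ᵥ x t + x t ⬝ᵥ P *ᵥ v) t := by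
  have hc : ∀ i, HasDerivAt (fun s => x s i) (v i) t := hasDerivAt_pi.mp h
  simp only [dotProduct, Matrix.mulVec, dotProduct]
  rw [← Finset.sum_add_distrib]
  apply HasDerivAt.fun_sum
  intro i _
  have h2 : HasDerivAt (fun s => ∑ j, P i j * x s j) (∑ j, P i j * v j) t := by
    apply HasDerivAt.fun_sum; intro j _; exact (hc j).const_mul _
  simpa [mul_comm] using (hc i).fun_mul h2

private lemma sqrt_add_le' {a b : ℝ} (ha : 0 ≤ a) (hb : 0 ≤ b) :
    Real.sqrt (a + b) ≤ Real.sqrt a + Real.sqrt b := by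
  have h1 : a + b ≤ (Real.sqrt a + Real.sqrt b) ^ 2 := by
    nlinarith [Real.sq_sqrt ha, Real.sq_sqrt hb, Real.sqrt_nonneg a, Real.sqrt_nonneg b]
  calc Real.sqrt (a + b) ≤ Real.sqrt ((Real.sqrt a + Real.sqrt b) ^ 2) := Real.sqrt_le_sqrt h1
    _ = Real.sqrt a + Real.sqrt b := Real.sqrt_sq (by positivity)

/-- the ultimate-bound estimate associated with the optimization
problem of Section 4: feasibility of the LMI with `P − γI ≻ 0` yields
`limsup |x(t)| ≤ √(f̄/γ)` for the closed loop `x' = (A + BKΘ)x + Df`. -/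
theorem stmt_16 (n l : ℕ) (hn : 0 < n) (hl : 0 < l)
    (A Θ : Matrix (Fin n) (Fin n) ℝ) (B : Matrix (Fin n) (Fin 1) ℝ)
    (K : Matrix (Fin 1) (Fin n) ℝ) (D : Matrix (Fin n) (Fin l) ℝ)
    (τ γ fbar : ℝ) (hτ : 0 < τ) (hγ : 0 < γ) (hf : 0 ≤ fbar)
    (P : Matrix (Fin n) (Fin n) ℝ) (hPsymm : P.IsSymm)
    (hPγ : ∀ z : Fin n → ℝ, z ≠ 0 →
      0 < z ⬝ᵥ (P - γ • (1 : Matrix (Fin n) (Fin n) ℝ)) *ᵥ z)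
    (hLMI : NegDefQF (Matrix.fromBlocks
      ((A + B * K * Θ)ᵀ * P + P * (A + B * K * Θ) + τ • P)
      (P * D) (Dᵀ * P) ((-τ) • (1 : Matrix (Fin l) (Fin l) ℝ))))
    (f : ℝ → Fin l → ℝ) (hfb : ∀ t ≥ (0 : ℝ), ∑ i, (f t i) ^ 2 ≤ fbar)
    (x : ℝ → Fin n → ℝ)
    (hx : ∀ t ≥ (0 : ℝ), HasDerivAt x ((A + B * K * Θ) *ᵥ x t + D *ᵥ f t) t) :
    limsup (fun t => euclidNorm (x t)) atTop ≤ Real.sqrt (fbar / γ) := by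
  set Acl := A + B * K * Θ with hAclDef
  set V : ℝ → ℝ := fun t => x t ⬝ᵥ P *ᵥ x t with hVdef
  set V' : ℝ → ℝ := fun t =>
    (Acl *ᵥ x t + D *ᵥ f t) ⬝ᵥ P *ᵥ x t + x t ⬝ᵥ P *ᵥ (Acl *ᵥ x t + D *ᵥ f t) with hV'def
  -- Quadratic form inequality from the LMI (nonstrict version, all vectors).
  have hQ : ∀ (v : Fin n → ℝ) (w : Fin l → ℝ),
      v ⬝ᵥ (Aclᵀ * P + P * Acl + τ • P) *ᵥ v + v ⬝ᵥ (P * D) *ᵥ w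
        + w ⬝ᵥ (Dᵀ * P) *ᵥ v + w ⬝ᵥ ((-τ) • (1 : Matrix (Fin l) (Fin l) ℝ)) *ᵥ w ≤ 0 := by
    intro v w
    by_cases hvw : v = 0 ∧ w = 0
    · simp [hvw.1, hvw.2]
    · have hz : Sum.elim v w ≠ 0 := by
        intro hz0
        exact hvw ⟨funext fun i => congrFun hz0 (Sum.inl i),
          funext fun i => congrFun hz0 (Sum.inr i)⟩
      have := hLMI (Sum.elim v w) hz
      rw [Matrix.fromBlocks_mulVec, sumElim_dotProduct_sumElim] at this
      simp only [dotProduct_add, Sum.elim_comp_inl, Sum.elim_comp_inr] at this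
      linarith
  -- Derivative of V.
  have hVder : ∀ t ≥ (0 : ℝ), HasDerivAt V (V' t) t := by
    intro t ht
    exact hasDerivAt_quadForm P x _ t (hx t ht)
  -- Bound on the derivative.
  have hbound : ∀ t ≥ (0 : ℝ), V' t ≤ (-τ) * V t + τ * fbar := by
    intro t ht
    have hid : V' t = (x t ⬝ᵥ (Aclᵀ * P + P * Acl + τ • P) *ᵥ x t + x t ⬝ᵥ (P * D) *ᵥ f t
          + f t ⬝ᵥ (Dᵀ * P) *ᵥ x t + f t ⬝ᵥ ((-τ) • (1 : Matrix (Fin l) (Fin l) ℝ)) *ᵥ f t)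
        - τ * (x t ⬝ᵥ P *ᵥ x t) + τ * (f t ⬝ᵥ f t) := by
      simp only [hV'def, Matrix.add_mulVec, Matrix.mulVec_add, dotProduct_add,
        add_dotProduct, dp_transpose', Matrix.smul_mulVec, dotProduct_smul,
        ← Matrix.mulVec_mulVec, Matrix.one_mulVec, Matrix.transpose_transpose, smul_eq_mul]
      ring
    have hw : f t ⬝ᵥ f t ≤ fbar := by
      have := hfb t ht
      simpa [dotProduct, pow_two] using this
    have hq := hQ (x t) (f t)
    have hτw : τ * (f t ⬝ᵥ f t) ≤ τ * fbar := mul_le_mul_of_nonneg_left hw hτ.le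
    simp only [hVdef]
    linarith [hid, hq, hτw]
  -- Grönwall bound.
  have hVb : ∀ t ≥ (0 : ℝ), V t ≤ gronwallBound (V 0) (-τ) (τ * fbar) t := by
    intro t ht
    have hcont : ContinuousOn V (Set.Icc 0 t) := fun s hs =>
      ((hVder s hs.1).continuousAt).continuousWithinAt
    have hslope : ∀ s ∈ Set.Ico (0 : ℝ) t, ∀ r, V' s < r →
        ∃ᶠ z in nhdsWithin s (Set.Ioi s), (z - s)⁻¹ * (V z - V s) < r := by
      intro s hs r hr
      have h := ((hVder s hs.1).hasDerivWithinAt (s := Set.Ici s)).liminf_right_slope_le hr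
      exact h.mono fun z hz => by
        rwa [slope_def_field, div_eq_inv_mul] at hz
    have key := le_gronwallBound_of_liminf_deriv_right_le (f := V) (f' := V')
      (a := 0) (b := t) hcont hslope le_rfl (fun s hs => hbound s hs.1)
    simpa using key t ⟨ht, le_rfl⟩
  -- Explicit form of the bound.
  set C : ℝ := |V 0| + fbar with hCdef
  have hC0 : 0 ≤ C := by positivity
  have hVb2 : ∀ t ≥ (0 : ℝ), V t ≤ fbar + C * Real.exp (-τ * t) := by
    intro t ht
    have h1 := hVb t ht
    rw [gronwallBound_of_K_ne_0 (by linarith : (-τ) ≠ 0)] at h1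
    have hdiv : τ * fbar / (-τ) = -fbar := by
      rw [div_neg, mul_comm, mul_div_assoc, div_self hτ.ne', mul_one]
    rw [hdiv] at h1
    have h1' : V t ≤ V 0 * Real.exp (-τ * t) + -fbar * (Real.exp (-τ * t) - 1) := h1
    have he : 0 < Real.exp (-τ * t) := Real.exp_pos _
    nlinarith [mul_le_mul_of_nonneg_right (le_abs_self (V 0)) he.le, abs_nonneg (V 0),
      mul_nonneg hf he.le]
  -- Lower bound: γ |v|² ≤ vᵀ P v.
  have hlow : ∀ v : Fin n → ℝ, γ * (v ⬝ᵥ v) ≤ v ⬝ᵥ P *ᵥ v := by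
    intro v
    by_cases hv : v = 0
    · simp [hv]
    · have := hPγ v hv
      simp only [Matrix.sub_mulVec, dotProduct_sub, Matrix.smul_mulVec,
        Matrix.one_mulVec, dotProduct_smul, smul_eq_mul] at this
      linarith
  -- Pointwise bound on enorm.
  have hxbound : ∀ t ≥ (0 : ℝ),
      euclidNorm (x t) ≤ Real.sqrt (fbar / γ) + Real.sqrt (C / γ * Real.exp (-τ * t)) := by
    intro t ht
    have hsum : ∑ i, (x t i) ^ 2 = x t ⬝ᵥ x t := by
      simp [dotProduct, pow_two]
    have h1 : γ * (x t ⬝ᵥ x t) ≤ V t := hlow (x t)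
    have h2 := hVb2 t ht
    have he : 0 < Real.exp (-τ * t) := Real.exp_pos _
    have h3 : ∑ i, (x t i) ^ 2 ≤ fbar / γ + C / γ * Real.exp (-τ * t) := by
      rw [hsum]
      have heq : fbar / γ + C / γ * Real.exp (-τ * t) = (fbar + C * Real.exp (-τ * t)) / γ := by
        ring
      rw [heq, le_div_iff₀ hγ, mul_comm]
      linarith
    have h4 : Real.sqrt (∑ i, (x t i) ^ 2)
        ≤ Real.sqrt (fbar / γ + C / γ * Real.exp (-τ * t)) := Real.sqrt_le_sqrt h3
    refine h4.trans (sqrt_add_le' (by positivity) (by positivity))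
  -- Conclude with the limsup.
  apply le_of_forall_pos_le_add
  intro ε hε
  apply limsup_le_of_le
  · exact Filter.isCoboundedUnder_le_of_le atTop (x := 0) (fun t => Real.sqrt_nonneg _)
  · have htend : Tendsto (fun t : ℝ => C / γ * Real.exp (-τ * t)) atTop (nhds 0) := by
      have h1 : Tendsto (fun t : ℝ => τ * t) atTop atTop :=
        Tendsto.const_mul_atTop hτ tendsto_id
      have h2 : Tendsto (fun t : ℝ => Real.exp (-τ * t)) atTop (nhds 0) :=
        (Real.tendsto_exp_neg_atTop_nhds_zero.comp h1).congr
          (fun t => (congrArg Real.exp (neg_mul τ t)).symm)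
      simpa using h2.const_mul (C / γ)
    have hev : ∀ᶠ t in atTop, C / γ * Real.exp (-τ * t) ≤ ε ^ 2 :=
      htend.eventually_le_const (by positivity)
    filter_upwards [hev, eventually_ge_atTop (0 : ℝ)] with t h1 h2
    have h5 := hxbound t h2
    have h6 : Real.sqrt (C / γ * Real.exp (-τ * t)) ≤ ε := by
      calc Real.sqrt (C / γ * Real.exp (-τ * t)) ≤ Real.sqrt (ε ^ 2) := Real.sqrt_le_sqrt h1
        _ = ε := Real.sqrt_sq hε.le
    linarith
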